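/- There exists a constant C > 0 such that for every continuously differentiable vector field u = (u₁, u₂) : ℝ² → ℝ² with div u(x) = 0 for all x, every R > 0 and every x₀ ∈ ℝ²: ∫_{B_R(x₀)} |u|³ dx ≤ C · ( (1/R) ( ∫_{B_{2R}(x₀)} |u|² dx )^{3/2} + ( ∫_{B_{2R}(x₀)} |u|² dx )^{5/4} · ( sup_{x ∈ B_{2R}(x₀)} |rot u(x)| )^{1/2} ), where C is independent of R, x₀ and u. -/

import Mathlib

open MeasureTheory

/-- `rot u = ∂_{x₂} u₁ - ∂_{x₁} u₂` for a vector field `u : ℝ² → ℝ²`. -/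
noncomputable def rot2 (u : EuclideanSpace ℝ (Fin 2) → EuclideanSpace ℝ (Fin 2))
    (x : EuclideanSpace ℝ (Fin 2)) : ℝ :=
  fderiv ℝ (fun y => u y 0) x (EuclideanSpace.single 1 1) -
    fderiv ℝ (fun y => u y 1) x (EuclideanSpace.single 0 1)

/-- `div u = ∂_{x₁} u₁ + ∂_{x₂} u₂` for a vector field `u : ℝ² → ℝ²`. -/
noncomputable def div2 (u : EuclideanSpace ℝ (Fin 2) → EuclideanSpace ℝ (Fin 2))
    (x : EuclideanSpace ℝ (Fin 2)) : ℝ :=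
  fderiv ℝ (fun y => u y 0) x (EuclideanSpace.single 0 1) +
    fderiv ℝ (fun y => u y 1) x (EuclideanSpace.single 1 1)

open Real Set Metric


noncomputable def ee (θ : ℝ) : EuclideanSpace ℝ (Fin 2) :=
  Real.cos θ • EuclideanSpace.single 0 1 + Real.sin θ • EuclideanSpace.single 1 1

noncomputable def ee' (θ : ℝ) : EuclideanSpace ℝ (Fin 2) :=
  (-Real.sin θ) • EuclideanSpace.single 0 1 + Real.cos θ • EuclideanSpace.single 1 1

lemma ee_apply0 (θ : ℝ) : ee θ 0 = Real.cos θ := by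
  simp [ee, EuclideanSpace.single_apply]

lemma ee_apply1 (θ : ℝ) : ee θ 1 = Real.sin θ := by
  simp [ee, EuclideanSpace.single_apply]

lemma norm_ee (θ : ℝ) : ‖ee θ‖ = 1 := by
  rw [EuclideanSpace.norm_eq]
  simp only [Fin.sum_univ_two, ee_apply0, ee_apply1]
  rw [show ‖Real.cos θ‖ ^ 2 + ‖Real.sin θ‖ ^ 2 = 1 by
    rw [Real.norm_eq_abs, Real.norm_eq_abs, sq_abs, sq_abs, Real.cos_sq_add_sin_sq]]
  exact Real.sqrt_one

lemma continuous_ee : Continuous ee := by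
  unfold ee; fun_prop

lemma continuous_ee' : Continuous ee' := by
  unfold ee'; fun_prop

lemma hasDerivAt_ee (θ : ℝ) : HasDerivAt ee (ee' θ) θ := by
  have h0 : HasDerivAt (fun t => Real.cos t • (EuclideanSpace.single 0 1 : EuclideanSpace ℝ (Fin 2)))
      ((-Real.sin θ) • EuclideanSpace.single 0 1) θ := (Real.hasDerivAt_cos θ).smul_const _
  have h1 : HasDerivAt (fun t => Real.sin t • (EuclideanSpace.single 1 1 : EuclideanSpace ℝ (Fin 2)))
      (Real.cos θ • EuclideanSpace.single 1 1) θ := (Real.hasDerivAt_sin θ).smul_const _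
  exact h0.add h1

lemma ee_periodic : ee π = ee (-π) := by
  unfold ee
  simp [Real.cos_neg, Real.sin_neg, Real.sin_pi]

noncomputable def XiEquiv (x : EuclideanSpace ℝ (Fin 2)) : (ℝ × ℝ) ≃ᵐ EuclideanSpace ℝ (Fin 2) :=
  ((MeasurableEquiv.finTwoArrow.symm.trans
    (MeasurableEquiv.toLp 2 (Fin 2 → ℝ))).trans (MeasurableEquiv.addLeft x))

lemma XiEquiv_apply (x : EuclideanSpace ℝ (Fin 2)) (p : ℝ × ℝ) (i : Fin 2) :
    XiEquiv x p i = x i + (![p.1, p.2] i) := by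
  rfl

lemma XiEquiv_measurePreserving (x : EuclideanSpace ℝ (Fin 2)) :
    MeasurePreserving (XiEquiv x) volume volume := by
  have h1 : MeasurePreserving (MeasurableEquiv.finTwoArrow.symm :
      (ℝ × ℝ) ≃ᵐ (Fin 2 → ℝ)) volume volume := (volume_preserving_finTwoArrow ℝ).symm
  have h2 : MeasurePreserving (MeasurableEquiv.toLp 2 (Fin 2 → ℝ)) volume volume :=
    (EuclideanSpace.volume_preserving_symm_measurableEquiv_toLp (Fin 2)).symm
  have h3 : MeasurePreserving (fun y => x + y :
      EuclideanSpace ℝ (Fin 2) → EuclideanSpace ℝ (Fin 2)) volume volume :=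
    measurePreserving_add_left volume x
  exact (h3.comp (h2.comp h1))

lemma XiEquiv_polar (x : EuclideanSpace ℝ (Fin 2)) (q : ℝ × ℝ) :
    XiEquiv x (polarCoord.symm q) = x + q.1 • ee q.2 := by
  ext i
  have := XiEquiv_apply x (polarCoord.symm q) i
  fin_cases i <;>
    simp_all [polarCoord_symm_apply, ee, EuclideanSpace.single_apply, mul_comm]

lemma contIntegrableOn_Ioo {h : ℝ → ℝ} (hh : Continuous h) {a b : ℝ} :
    IntegrableOn h (Ioo a b) :=
  (hh.continuousOn.integrableOn_compact isCompact_Icc).mono_set Ioo_subset_Icc_self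

lemma polar_eq (h : EuclideanSpace ℝ (Fin 2) → ℝ) (hh : Continuous h)
    (x : EuclideanSpace ℝ (Fin 2)) (ρ : ℝ) (hρ : 0 < ρ) :
    ∫ y in Metric.ball x ρ, h y
      = ∫ r in Ioo (0:ℝ) ρ, ∫ θ in Ioo (-π) π, r * h (x + r • ee θ) := by
  set Ξ := XiEquiv x
  set D : Set (ℝ × ℝ) := {p | p.1^2 + p.2^2 < ρ^2} with hD
  have hDmeas : MeasurableSet D :=
    (isOpen_lt (by fun_prop) continuous_const).measurableSet
  have hXinorm : ∀ p : ℝ × ℝ, ‖Ξ p - x‖ = Real.sqrt (p.1^2 + p.2^2) := by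
    intro p
    rw [EuclideanSpace.norm_eq]
    congr 1
    rw [Fin.sum_univ_two]
    have h0 : (Ξ p - x) 0 = p.1 := by
      have := XiEquiv_apply x p 0; simp only [PiLp.sub_apply]; rw [this]; simp
    have h1 : (Ξ p - x) 1 = p.2 := by
      have := XiEquiv_apply x p 1; simp only [PiLp.sub_apply]; rw [this]; simp
    rw [h0, h1]
    simp [sq_abs]
  have hpre : Ξ ⁻¹' (Metric.ball x ρ) = D := by
    ext p
    simp only [mem_preimage, Metric.mem_ball, dist_eq_norm, hD, mem_setOf_eq]
    rw [hXinorm p]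
    rw [Real.sqrt_lt' hρ]
  have step1 : ∫ y in Metric.ball x ρ, h y = ∫ p in D, h (Ξ p) := by
    rw [← hpre]
    exact ((XiEquiv_measurePreserving x).setIntegral_preimage_emb
      (MeasurableEquiv.measurableEmbedding Ξ) h _).symm
  have step2 : ∫ p in D, h (Ξ p) = ∫ p : ℝ × ℝ, D.indicator (fun p => h (Ξ p)) p :=
    (integral_indicator hDmeas).symm
  have step3 : (∫ p in polarCoord.target, p.1 • D.indicator (fun p => h (Ξ p)) (polarCoord.symm p))
      = ∫ p : ℝ × ℝ, D.indicator (fun p => h (Ξ p)) p :=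
    integral_comp_polarCoord_symm _
  have key : ∀ p ∈ polarCoord.target,
      p.1 • D.indicator (fun p => h (Ξ p)) (polarCoord.symm p)
        = ({q : ℝ × ℝ | q.1 < ρ}).indicator (fun q => q.1 * h (x + q.1 • ee q.2)) p := by
    intro p hp
    rw [polarCoord_target] at hp
    have hp1 : 0 < p.1 := hp.1
    have hmem : polarCoord.symm p ∈ D ↔ p.1 < ρ := by
      simp only [hD, mem_setOf_eq, polarCoord_symm_apply]
      have e : (p.1 * cos p.2) ^ 2 + (p.1 * sin p.2) ^ 2 = p.1 ^ 2 := by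
        have := Real.sin_sq_add_cos_sq p.2
        linear_combination p.1 ^ 2 * this
      rw [e]
      constructor
      · intro hlt
        exact lt_of_pow_lt_pow_left₀ 2 hρ.le hlt
      · intro hlt
        exact pow_lt_pow_left₀ hlt hp1.le (by norm_num)
    by_cases hc : p.1 < ρ
    · rw [Set.indicator_of_mem (hmem.2 hc), Set.indicator_of_mem (by exact hc),
        XiEquiv_polar, smul_eq_mul]
    · rw [Set.indicator_of_notMem (fun hm => hc (hmem.1 hm)),
        Set.indicator_of_notMem (by exact hc), smul_zero]
  have step4 : (∫ p in polarCoord.target, p.1 • D.indicator (fun p => h (Ξ p)) (polarCoord.symm p))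
      = ∫ p in (Ioo (0:ℝ) ρ) ×ˢ (Ioo (-π) π), p.1 * h (x + p.1 • ee p.2) := by
    have hset : polarCoord.target ∩ {q : ℝ × ℝ | q.1 < ρ} = (Ioo (0:ℝ) ρ) ×ˢ (Ioo (-π) π) := by
      rw [polarCoord_target]
      ext p
      simp only [mem_inter_iff, mem_prod, mem_Ioi, mem_Ioo, mem_setOf_eq]
      tauto
    rw [setIntegral_congr_fun polarCoord.open_target.measurableSet key,
      setIntegral_indicator (isOpen_lt continuous_fst continuous_const).measurableSet, hset]
  have hcont : Continuous fun p : ℝ × ℝ => p.1 * h (x + p.1 • ee p.2) := by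
    have : Continuous ee := by unfold ee; fun_prop
    fun_prop
  have hint : IntegrableOn (fun p : ℝ × ℝ => p.1 * h (x + p.1 • ee p.2))
      ((Ioo (0:ℝ) ρ) ×ˢ (Ioo (-π) π)) (volume.prod volume) := by
    have : IntegrableOn (fun p : ℝ × ℝ => p.1 * h (x + p.1 • ee p.2))
        ((Icc (0:ℝ) ρ) ×ˢ (Icc (-π) π)) (volume.prod volume) := by
      rw [← Measure.volume_eq_prod]
      exact hcont.continuousOn.integrableOn_compact (isCompact_Icc.prod isCompact_Icc)
    exact this.mono_set (prod_mono Ioo_subset_Icc_self Ioo_subset_Icc_self)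
  have step5 : ∫ p in (Ioo (0:ℝ) ρ) ×ˢ (Ioo (-π) π), p.1 * h (x + p.1 • ee p.2)
      = ∫ r in Ioo (0:ℝ) ρ, ∫ θ in Ioo (-π) π, r * h (x + r • ee θ) := by
    rw [Measure.volume_eq_prod]
    exact setIntegral_prod _ hint
  rw [step1, step2, ← step3, step4, step5]

lemma hasDerivAt_radial {f : EuclideanSpace ℝ (Fin 2) → ℝ} (hf : Differentiable ℝ f)
    (x : EuclideanSpace ℝ (Fin 2)) (θ r : ℝ) :
    HasDerivAt (fun s : ℝ => f (x + s • ee θ)) (fderiv ℝ f (x + r • ee θ) (ee θ)) r := by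
  have h1 : HasDerivAt (fun s : ℝ => x + s • ee θ) (ee θ) r := by
    simpa using ((hasDerivAt_id r).smul_const (ee θ)).const_add x
  exact ((hf _).hasFDerivAt.comp_hasDerivAt r h1)

lemma hasDerivAt_tangential {g : EuclideanSpace ℝ (Fin 2) → ℝ} (hg : Differentiable ℝ g)
    (x : EuclideanSpace ℝ (Fin 2)) (r θ : ℝ) :
    HasDerivAt (fun t : ℝ => g (x + r • ee t)) (fderiv ℝ g (x + r • ee θ) (r • ee' θ)) θ := by
  have h1 : HasDerivAt (fun t : ℝ => x + r • ee t) (r • ee' θ) θ :=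
    ((hasDerivAt_ee θ).const_smul r).const_add x
  exact ((hg _).hasFDerivAt.comp_hasDerivAt θ h1)

lemma mem_cb {x : EuclideanSpace ℝ (Fin 2)} {r c : ℝ} (h : |r| ≤ c) (θ : ℝ) :
    x + r • ee θ ∈ Metric.closedBall x c := by
  rw [Metric.mem_closedBall, dist_eq_norm, add_sub_cancel_left, norm_smul, norm_ee,
    mul_one, Real.norm_eq_abs]
  exact h

lemma sin_int_zero : ∫ θ in Ioo (-π) π, Real.sin θ = 0 := by
  rw [← integral_Ioc_eq_integral_Ioo, ← intervalIntegral.integral_of_le (by linarith [Real.pi_pos])]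
  simp [integral_sin]

lemma cos_int_zero : ∫ θ in Ioo (-π) π, Real.cos θ = 0 := by
  rw [← integral_Ioc_eq_integral_Ioo, ← intervalIntegral.integral_of_le (by linarith [Real.pi_pos])]
  simp [integral_cos]

lemma tangential_int_zero {g : EuclideanSpace ℝ (Fin 2) → ℝ} (hg : ContDiff ℝ 1 g)
    (x : EuclideanSpace ℝ (Fin 2)) (r : ℝ) :
    ∫ θ in Ioo (-π) π, fderiv ℝ g (x + r • ee θ) (ee' θ) = 0 := by
  have hgd : Differentiable ℝ g := hg.differentiable one_ne_zero
  have hdfc : Continuous fun y => fderiv ℝ g y := hg.continuous_fderiv one_ne_zero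
  rcases eq_or_ne r 0 with hr | hr
  · subst hr
    have hcongr : ∀ θ ∈ Ioo (-π) π, fderiv ℝ g (x + (0:ℝ) • ee θ) (ee' θ)
        = Real.sin θ * (-(fderiv ℝ g x (EuclideanSpace.single 0 1)))
          + Real.cos θ * (fderiv ℝ g x (EuclideanSpace.single 1 1)) := by
      intro θ _
      rw [zero_smul, add_zero]
      simp only [ee', map_add, ContinuousLinearMap.map_smul, smul_eq_mul]
      ring
    rw [setIntegral_congr_fun measurableSet_Ioo hcongr, integral_add, integral_mul_const,
       integral_mul_const, sin_int_zero, cos_int_zero]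
    · ring
    · exact (contIntegrableOn_Ioo (by fun_prop)).mono_measure le_rfl
    · exact (contIntegrableOn_Ioo (by fun_prop)).mono_measure le_rfl
  · have hT : ∀ θ, HasDerivAt (fun t : ℝ => g (x + r • ee t))
        (fderiv ℝ g (x + r • ee θ) (r • ee' θ)) θ := hasDerivAt_tangential hgd x r
    have hcont : Continuous fun θ => fderiv ℝ g (x + r • ee θ) (r • ee' θ) := by
      apply Continuous.clm_apply
      · exact hdfc.comp (by have := continuous_ee; fun_prop)
      · have := continuous_ee'; fun_prop
    have hftc : ∫ θ in (-π)..π, fderiv ℝ g (x + r • ee θ) (r • ee' θ)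
        = g (x + r • ee π) - g (x + r • ee (-π)) :=
      intervalIntegral.integral_eq_sub_of_hasDerivAt (fun θ _ => hT θ)
        (hcont.intervalIntegrable _ _)
    have hzero : ∫ θ in Ioo (-π) π, fderiv ℝ g (x + r • ee θ) (r • ee' θ) = 0 := by
      rw [← integral_Ioc_eq_integral_Ioo,
        ← intervalIntegral.integral_of_le (by linarith [Real.pi_pos])]
      rw [hftc, ee_periodic, sub_self]
    have hsmul : ∀ θ, fderiv ℝ g (x + r • ee θ) (r • ee' θ)
        = r * fderiv ℝ g (x + r • ee θ) (ee' θ) := by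
      intro θ; rw [ContinuousLinearMap.map_smul, smul_eq_mul]
    rw [show (fun θ => fderiv ℝ g (x + r • ee θ) (r • ee' θ))
      = fun θ => r * fderiv ℝ g (x + r • ee θ) (ee' θ) from funext hsmul] at hzero
    rw [integral_const_mul] at hzero
    exact (mul_eq_zero.mp hzero).resolve_left hr

lemma volume_Ioo_pi : (volume (Ioo (-π) π)).toReal = 2 * π := by
  rw [Real.volume_Ioo, ENNReal.toReal_ofReal (by linarith [Real.pi_pos])]
  ring

lemma key_lemma (f g ω : EuclideanSpace ℝ (Fin 2) → ℝ)
    (hf : ContDiff ℝ 1 f) (hg : ContDiff ℝ 1 g) (hω : Continuous ω)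
    (τ : ℝ → ℝ) (hτc : Continuous τ) (hτ1 : ∀ θ, |τ θ| ≤ 1)
    (hid : ∀ y θ, fderiv ℝ f y (ee θ) = fderiv ℝ g y (ee' θ) + ω y * τ θ)
    (x : EuclideanSpace ℝ (Fin 2)) (ρ M : ℝ) (hρ : 0 < ρ) (hM0 : 0 ≤ M)
    (hM : ∀ y ∈ Metric.closedBall x ρ, |ω y| ≤ M) :
    |(∫ y in Metric.ball x ρ, f y) - π * ρ^2 * f x| ≤ 2*π/3 * M * ρ^3 := by
  have hfd : Differentiable ℝ f := hf.differentiable one_ne_zero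
  have hdfc : Continuous fun y => fderiv ℝ f y := hf.continuous_fderiv one_ne_zero
  set G : ℝ → ℝ := fun r => ∫ θ in Ioo (-π) π, f (x + r • ee θ) with hGdef
  set D : ℝ → ℝ := fun r => ∫ θ in Ioo (-π) π, fderiv ℝ f (x + r • ee θ) (ee θ) with hDdef
  -- derivative of G
  have hGd : ∀ r : ℝ, HasDerivAt G (D r) r := by
    intro r₀
    obtain ⟨z, hz, hzB⟩ := (isCompact_closedBall x (|r₀| + 1)).exists_isMaxOn
      ⟨x, Metric.mem_closedBall_self (by positivity)⟩
      ((hdfc.norm).continuousOn)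
    rw [isMaxOn_iff] at hzB
    set B := ‖fderiv ℝ f z‖ with hB
    have main := hasDerivAt_integral_of_dominated_loc_of_deriv_le
      (F := fun r θ => f (x + r • ee θ))
      (F' := fun r θ => fderiv ℝ f (x + r • ee θ) (ee θ))
      (bound := fun _ => B)
      (μ := volume.restrict (Ioo (-π) π)) (x₀ := r₀)
      (Metric.ball_mem_nhds r₀ (by norm_num : (0:ℝ) < 1))
      (Filter.Eventually.of_forall fun r =>
        ((hf.continuous.comp (by have := continuous_ee; fun_prop)).aestronglyMeasurable))
      ((contIntegrableOn_Ioo (hf.continuous.comp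
        (by have := continuous_ee; fun_prop) : Continuous fun θ => f (x + r₀ • ee θ))))
      ((Continuous.clm_apply (hdfc.comp (by have := continuous_ee; fun_prop))
        (by have := continuous_ee; fun_prop)).aestronglyMeasurable)
      (Filter.Eventually.of_forall fun θ => by
        intro r hr
        have hmem : x + r • ee θ ∈ Metric.closedBall x (|r₀| + 1) := by
          apply mem_cb _ θ
          have : |r - r₀| < 1 := by
            simpa [Real.dist_eq] using (Metric.mem_ball.mp hr)
          calc |r| = |r₀ + (r - r₀)| := by ring_nf
          _ ≤ |r₀| + |r - r₀| := abs_add_le _ _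
          _ ≤ |r₀| + 1 := by linarith
        calc ‖fderiv ℝ f (x + r • ee θ) (ee θ)‖
            ≤ ‖fderiv ℝ f (x + r • ee θ)‖ * ‖ee θ‖ := ContinuousLinearMap.le_opNorm _ _
        _ = ‖fderiv ℝ f (x + r • ee θ)‖ := by rw [norm_ee, mul_one]
        _ ≤ B := hzB _ hmem)
      ((integrableOn_const measure_Ioo_lt_top.ne))
      (Filter.Eventually.of_forall fun θ => fun r _ => hasDerivAt_radial hfd x θ r)
    exact main.2
  have hGcont : Continuous G := by
    rw [continuous_iff_continuousAt]; exact fun r => (hGd r).continuousAt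
  -- bound on D
  have hDbound : ∀ r ∈ Icc (0:ℝ) ρ, ‖D r‖ ≤ 2 * π * M := by
    intro r hr
    have hsplit : D r = (∫ θ in Ioo (-π) π, fderiv ℝ g (x + r • ee θ) (ee' θ))
        + ∫ θ in Ioo (-π) π, ω (x + r • ee θ) * τ θ := by
      rw [hDdef, ← integral_add]
      · exact setIntegral_congr_fun measurableSet_Ioo fun θ _ => hid _ θ
      · refine (contIntegrableOn_Ioo ?_)
        exact Continuous.clm_apply ((hg.continuous_fderiv one_ne_zero).comp
          (by have := continuous_ee; fun_prop)) (by have := continuous_ee'; fun_prop)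
      · exact contIntegrableOn_Ioo (by have := continuous_ee; fun_prop)
    rw [hsplit, tangential_int_zero hg x r, zero_add]
    have : ‖∫ θ in Ioo (-π) π, ω (x + r • ee θ) * τ θ‖
        ≤ ∫ θ in Ioo (-π) π, M :=
      norm_integral_le_of_norm_le (integrableOn_const measure_Ioo_lt_top.ne)
        (Filter.Eventually.of_forall fun θ => by
          have hmem : x + r • ee θ ∈ Metric.closedBall x ρ :=
            mem_cb (by rw [abs_of_nonneg hr.1]; exact hr.2) θ
          calc ‖ω (x + r • ee θ) * τ θ‖ = |ω (x + r • ee θ)| * |τ θ| := abs_mul _ _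
          _ ≤ M * 1 := mul_le_mul (hM _ hmem) (hτ1 θ) (abs_nonneg _) hM0
          _ = M := mul_one M)
    calc ‖∫ θ in Ioo (-π) π, ω (x + r • ee θ) * τ θ‖ ≤ ∫ θ in Ioo (-π) π, M := this
    _ = 2 * π * M := by rw [setIntegral_const, smul_eq_mul, measureReal_def, volume_Ioo_pi]
  -- Lipschitz bound
  have hLip : ∀ r ∈ Icc (0:ℝ) ρ, |G r - G 0| ≤ 2 * π * M * r := by
    intro r hr
    have := (convex_Icc (0:ℝ) ρ).norm_image_sub_le_of_norm_hasDerivWithin_le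
      (fun s _ => (hGd s).hasDerivWithinAt) hDbound (Set.left_mem_Icc.mpr hρ.le) hr
    simpa [Real.norm_eq_abs, abs_of_nonneg hr.1] using this
  -- value at 0
  have hG0 : G 0 = 2 * π * f x := by
    rw [hGdef]
    simp only [zero_smul, add_zero]
    rw [setIntegral_const, smul_eq_mul, measureReal_def, volume_Ioo_pi]
  -- polar decomposition
  have hpolar : ∫ y in Metric.ball x ρ, f y = ∫ r in Ioo (0:ℝ) ρ, r * G r := by
    rw [polar_eq f hf.continuous x ρ hρ]
    exact setIntegral_congr_fun measurableSet_Ioo fun r _ => integral_const_mul r _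
  have hconstpart : ∫ r in Ioo (0:ℝ) ρ, r * G 0 = π * ρ^2 * f x := by
    rw [integral_mul_const, show ∫ r in Ioo (0:ℝ) ρ, r = ρ^2/2 by
      rw [← integral_Ioc_eq_integral_Ioo, ← intervalIntegral.integral_of_le hρ.le]
      simp [integral_id], hG0]
    ring
  have hint1 : IntegrableOn (fun r => r * G r) (Ioo (0:ℝ) ρ) :=
    contIntegrableOn_Ioo (continuous_id.mul hGcont)
  have hint2 : IntegrableOn (fun r => r * G 0) (Ioo (0:ℝ) ρ) :=
    contIntegrableOn_Ioo (continuous_id.mul continuous_const)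
  have hsub : (∫ y in Metric.ball x ρ, f y) - π * ρ^2 * f x
      = ∫ r in Ioo (0:ℝ) ρ, (r * G r - r * G 0) := by
    rw [hpolar, ← hconstpart, integral_sub hint1 hint2]
  rw [hsub]
  calc ‖∫ r in Ioo (0:ℝ) ρ, (r * G r - r * G 0)‖
      ≤ ∫ r in Ioo (0:ℝ) ρ, 2 * π * M * r^2 := by
        apply norm_integral_le_of_norm_le
        · exact contIntegrableOn_Ioo (by fun_prop)
        · rw [ae_restrict_iff' measurableSet_Ioo]
          refine Filter.Eventually.of_forall fun r hr => ?_
          have h1 : |G r - G 0| ≤ 2 * π * M * r := hLip r ⟨hr.1.le, hr.2.le⟩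
          calc ‖r * G r - r * G 0‖ = |r| * |G r - G 0| := by
                rw [← abs_mul, Real.norm_eq_abs]; ring_nf
          _ ≤ r * (2 * π * M * r) := by
                rw [abs_of_pos hr.1]
                exact mul_le_mul_of_nonneg_left h1 hr.1.le
          _ = 2 * π * M * r^2 := by ring
  _ = 2*π/3 * M * ρ^3 := by
        rw [integral_const_mul, show ∫ r in Ioo (0:ℝ) ρ, r^2 = ρ^3/3 by
          rw [← integral_Ioc_eq_integral_Ioo, ← intervalIntegral.integral_of_le hρ.le]
          simp [integral_pow]
          ring]
        ring

lemma rot2_continuous (u : EuclideanSpace ℝ (Fin 2) → EuclideanSpace ℝ (Fin 2))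
    (hu : ContDiff ℝ 1 u) : Continuous (rot2 u) := by
  have hf0 : ContDiff ℝ 1 (fun y => u y 0) := contDiff_euclidean.mp hu 0
  have hf1 : ContDiff ℝ 1 (fun y => u y 1) := contDiff_euclidean.mp hu 1
  unfold rot2
  exact (((hf0.continuous_fderiv one_ne_zero).clm_apply continuous_const).sub
    ((hf1.continuous_fderiv one_ne_zero).clm_apply continuous_const))

lemma comp_bound (u : EuclideanSpace ℝ (Fin 2) → EuclideanSpace ℝ (Fin 2))
    (hu : ContDiff ℝ 1 u) (hdiv : ∀ y, div2 u y = 0)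
    (x : EuclideanSpace ℝ (Fin 2)) (ρ M : ℝ) (hρ : 0 < ρ) (hM0 : 0 ≤ M)
    (hM : ∀ y ∈ Metric.closedBall x ρ, |rot2 u y| ≤ M) (j : Fin 2) :
    π * ρ^2 * |u x j| ≤ (∫ y in Metric.ball x ρ, |u y j|) + 2*π/3 * M * ρ^3 := by
  have hf0 : ContDiff ℝ 1 (fun y => u y 0) := contDiff_euclidean.mp hu 0
  have hf1 : ContDiff ℝ 1 (fun y => u y 1) := contDiff_euclidean.mp hu 1
  have hrotc : Continuous (rot2 u) := rot2_continuous u hu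
  have habs : ∀ (v : EuclideanSpace ℝ (Fin 2) → ℝ),
      |(∫ y in Metric.ball x ρ, v y) - π * ρ^2 * v x| ≤ 2*π/3 * M * ρ^3 →
      π * ρ^2 * |v x| ≤ (∫ y in Metric.ball x ρ, |v y|) + 2*π/3 * M * ρ^3 := by
    intro v hv
    have h1 : |∫ y in Metric.ball x ρ, v y| ≤ ∫ y in Metric.ball x ρ, |v y| := by
      simpa [Real.norm_eq_abs] using
        norm_integral_le_integral_norm (μ := volume.restrict (Metric.ball x ρ)) v
    have h2 : |π * ρ^2 * v x| = π * ρ^2 * |v x| := by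
      rw [abs_mul, abs_of_nonneg (by positivity : (0:ℝ) ≤ π * ρ^2)]
    calc π * ρ^2 * |v x| = |π * ρ^2 * v x| := h2.symm
    _ ≤ |∫ y in Metric.ball x ρ, v y| + |(∫ y in Metric.ball x ρ, v y) - π * ρ^2 * v x| := by
        have := abs_sub_abs_le_abs_sub (π * ρ^2 * v x) (∫ y in Metric.ball x ρ, v y)
        have h3 := abs_sub_comm ((∫ y in Metric.ball x ρ, v y)) (π * ρ^2 * v x)
        linarith [abs_sub_abs_le_abs_sub (π * ρ^2 * v x) (∫ y in Metric.ball x ρ, v y),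
          abs_sub_comm (π * ρ^2 * v x) (∫ y in Metric.ball x ρ, v y)]
    _ ≤ (∫ y in Metric.ball x ρ, |v y|) + 2*π/3 * M * ρ^3 := add_le_add h1 hv
  fin_cases j
  · refine habs _ (key_lemma _ (fun y => -(u y 1)) (rot2 u) hf0 hf1.neg hrotc
      Real.sin Real.continuous_sin (fun θ => Real.abs_sin_le_one θ) ?_ x ρ M hρ hM0 hM)
    intro y θ
    have hgd : fderiv ℝ (fun y => -(u y 1)) y = -(fderiv ℝ (fun y => u y 1) y) := by
      rw [fderiv_fun_neg]
    have hdy := hdiv y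
    unfold div2 at hdy
    unfold rot2
    rw [hgd]
    simp only [ee, ee', map_add, ContinuousLinearMap.map_smul, smul_eq_mul,
      ContinuousLinearMap.neg_apply]
    linear_combination (Real.cos θ) * hdy
  · refine habs _ (key_lemma _ (fun y => u y 0) (rot2 u) hf1 hf0 hrotc
      (fun θ => -Real.cos θ) (by fun_prop) (fun θ => by
        rw [abs_neg]; exact Real.abs_cos_le_one θ) ?_ x ρ M hρ hM0 hM)
    intro y θ
    have hdy := hdiv y
    unfold div2 at hdy
    unfold rot2
    simp only [ee, ee', map_add, ContinuousLinearMap.map_smul, smul_eq_mul]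
    linear_combination (Real.sin θ) * hdy

lemma ball_area (x : EuclideanSpace ℝ (Fin 2)) (ρ : ℝ) (hρ : 0 < ρ) :
    ∫ _y in Metric.ball x ρ, (1:ℝ) = π * ρ^2 := by
  rw [polar_eq (fun _ => (1:ℝ)) continuous_const x ρ hρ]
  have : ∀ r ∈ Ioo (0:ℝ) ρ, (∫ _θ in Ioo (-π) π, r * 1) = 2 * π * r := by
    intro r _
    rw [setIntegral_const, smul_eq_mul, measureReal_def, volume_Ioo_pi]
    ring
  rw [setIntegral_congr_fun measurableSet_Ioo this, integral_const_mul,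
    show ∫ r in Ioo (0:ℝ) ρ, r = ρ^2/2 by
      rw [← integral_Ioc_eq_integral_Ioo, ← intervalIntegral.integral_of_le hρ.le]
      simp [integral_id]]
  ring

lemma coord_le_norm (v : EuclideanSpace ℝ (Fin 2)) (j : Fin 2) : |v j| ≤ ‖v‖ := by
  rw [EuclideanSpace.norm_eq]
  have h1 : ‖v j‖^2 ≤ ∑ i, ‖v i‖^2 :=
    Finset.single_le_sum (f := fun i => ‖v i‖^2) (fun i _ => sq_nonneg _) (Finset.mem_univ j)
  calc |v j| = Real.sqrt (‖v j‖^2) := by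
        rw [Real.sqrt_sq_eq_abs, Real.norm_eq_abs, abs_abs]
  _ ≤ _ := Real.sqrt_le_sqrt h1

lemma norm_le_sum_coord (v : EuclideanSpace ℝ (Fin 2)) : ‖v‖ ≤ |v 0| + |v 1| := by
  rw [EuclideanSpace.norm_eq, Fin.sum_univ_two]
  have : ‖v 0‖^2 + ‖v 1‖^2 ≤ (|v 0| + |v 1|)^2 := by
    simp only [Real.norm_eq_abs]
    nlinarith [abs_nonneg (v 0), abs_nonneg (v 1)]
  calc Real.sqrt (‖v 0‖^2 + ‖v 1‖^2) ≤ Real.sqrt ((|v 0| + |v 1|)^2) := Real.sqrt_le_sqrt this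
  _ = |v 0| + |v 1| := Real.sqrt_sq (by positivity)

lemma pointwise_bound (u : EuclideanSpace ℝ (Fin 2) → EuclideanSpace ℝ (Fin 2))
    (hu : ContDiff ℝ 1 u) (hdiv : ∀ y, div2 u y = 0)
    (x₀ : EuclideanSpace ℝ (Fin 2)) (R : ℝ) (hR : 0 < R)
    (x : EuclideanSpace ℝ (Fin 2)) (hx : x ∈ Metric.ball x₀ R)
    (Ω : ℝ) (hΩ : ∀ y ∈ Metric.ball x₀ (2*R), |rot2 u y| ≤ Ω)
    (E : ℝ) (hE : E = ∫ y in Metric.ball x₀ (2*R), ‖u y‖^2) (hEpos : 0 < E) :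
    ‖u x‖ ≤ 4 * (Real.sqrt E / R + Real.sqrt (Real.sqrt E) * Real.sqrt Ω) := by
  set a := Real.sqrt E with ha_def
  have ha : 0 < a := Real.sqrt_pos.mpr hEpos
  have hEa : E = a^2 := (Real.sq_sqrt hEpos.le).symm
  have hΩ0 : 0 ≤ Ω := le_trans (abs_nonneg _) (hΩ x (by
    rw [Metric.mem_ball] at hx ⊢; linarith))
  -- generic step
  have step : ∀ ρ : ℝ, 0 < ρ → ρ ≤ R → ‖u x‖ ≤ 2*a/ρ + 4/3*Ω*ρ := by
    intro ρ hρ hρR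
    have hsubset : Metric.closedBall x ρ ⊆ Metric.ball x₀ (2*R) := by
      intro y hy
      rw [Metric.mem_closedBall] at hy
      rw [Metric.mem_ball] at hx ⊢
      calc dist y x₀ ≤ dist y x + dist x x₀ := dist_triangle _ _ _
      _ < ρ + R := by linarith
      _ ≤ 2*R := by linarith
    have hM : ∀ y ∈ Metric.closedBall x ρ, |rot2 u y| ≤ Ω :=
      fun y hy => hΩ y (hsubset hy)
    have hvol : (volume (Metric.ball x ρ)).toReal = π * ρ^2 := by
      have := ball_area x ρ hρ
      rwa [setIntegral_const, smul_eq_mul, mul_one] at this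
    -- integral bound for coordinates
    have hIbound : ∀ j : Fin 2, (∫ y in Metric.ball x ρ, |u y j|) ≤ π*ρ*a/2 + ρ*a/2 := by
      intro j
      set c₁ := a/(2*ρ) with hc₁
      set c₂ := ρ/(2*a) with hc₂
      have hcont_j : Continuous fun y => u y j := (contDiff_euclidean.mp hu j).continuous
      have hint_abs : IntegrableOn (fun y => |u y j|) (Metric.ball x ρ) :=
        ((hcont_j.abs.continuousOn).integrableOn_compact
          (isCompact_closedBall x ρ)).mono_set Metric.ball_subset_closedBall
      have hint_sq : IntegrableOn (fun y => c₁ + c₂ * (u y j)^2) (Metric.ball x ρ) :=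
        (((continuous_const.add (continuous_const.mul
          (hcont_j.pow 2))).continuousOn).integrableOn_compact
          (isCompact_closedBall x ρ)).mono_set Metric.ball_subset_closedBall
      have hpt : ∀ y ∈ Metric.ball x ρ, |u y j| ≤ c₁ + c₂ * (u y j)^2 := by
        intro y _
        rw [hc₁, hc₂]
        have h2aρ : (0:ℝ) < 2*a*ρ := by positivity
        have hkey : a/(2*ρ) + ρ/(2*a)*(u y j)^2 - |u y j|
            = (a - ρ*|u y j|)^2/(2*a*ρ) := by
          field_simp
          ring_nf
          simp only [sq_abs]
        have h4 := div_nonneg (sq_nonneg (a - ρ*|u y j|)) h2aρ.le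
        linarith only [hkey, h4]
      have h1 : (∫ y in Metric.ball x ρ, |u y j|)
          ≤ ∫ y in Metric.ball x ρ, (c₁ + c₂ * (u y j)^2) :=
        setIntegral_mono_on hint_abs hint_sq measurableSet_ball hpt
      have hint_c : IntegrableOn (fun _ => c₁) (Metric.ball x ρ) :=
        integrableOn_const measure_ball_lt_top.ne
      have hint_q : IntegrableOn (fun y => c₂*(u y j)^2) (Metric.ball x ρ) :=
        ((continuous_const.mul (hcont_j.pow 2)).continuousOn.integrableOn_compact
          (isCompact_closedBall x ρ)).mono_set Metric.ball_subset_closedBall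
      have h2 : (∫ y in Metric.ball x ρ, (c₁ + c₂ * (u y j)^2))
          = c₁ * (π * ρ^2) + c₂ * ∫ y in Metric.ball x ρ, (u y j)^2 := by
        rw [integral_add hint_c hint_q, setIntegral_const, smul_eq_mul,
          measureReal_def, hvol, integral_const_mul]
        ring
      have h3 : (∫ y in Metric.ball x ρ, (u y j)^2) ≤ E := by
        have hmono1 : (∫ y in Metric.ball x ρ, (u y j)^2)
            ≤ ∫ y in Metric.ball x ρ, ‖u y‖^2 := by
          apply setIntegral_mono_on
          · exact ((hcont_j.pow 2).continuousOn.integrableOn_compact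
              (isCompact_closedBall x ρ)).mono_set Metric.ball_subset_closedBall
          · exact ((hu.continuous.norm.pow 2).continuousOn.integrableOn_compact
              (isCompact_closedBall x ρ)).mono_set Metric.ball_subset_closedBall
          · exact measurableSet_ball
          · intro y _
            have := coord_le_norm (u y) j
            nlinarith [abs_nonneg (u y j), sq_abs (u y j), norm_nonneg (u y)]
        have hmono2 : (∫ y in Metric.ball x ρ, ‖u y‖^2)
            ≤ ∫ y in Metric.ball x₀ (2*R), ‖u y‖^2 := by
          apply setIntegral_mono_set
          · exact ((hu.continuous.norm.pow 2).continuousOn.integrableOn_compact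
              (isCompact_closedBall x₀ (2*R))).mono_set Metric.ball_subset_closedBall
          · exact Filter.Eventually.of_forall fun y => by positivity
          · exact HasSubset.Subset.eventuallyLE
              (Metric.ball_subset_closedBall.trans hsubset)
        rw [hE]; linarith
      have hc1v : c₁ * (π * ρ^2) = π*ρ*a/2 := by rw [hc₁]; field_simp
      have hc2v : c₂ * E ≤ ρ*a/2 := by
        rw [hc₂, hEa]; rw [div_mul_eq_mul_div, div_le_iff₀ (by positivity)]; ring_nf
        nlinarith [ha, hρ]
      have hc2m : c₂ * (∫ y in Metric.ball x ρ, (u y j)^2) ≤ c₂ * E :=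
        mul_le_mul_of_nonneg_left h3 (by rw [hc₂]; positivity)
      linarith
    have c0 := comp_bound u hu hdiv x ρ Ω hρ hΩ0 hM 0
    have c1 := comp_bound u hu hdiv x ρ Ω hρ hΩ0 hM 1
    have hnorm : ‖u x‖ ≤ |u x 0| + |u x 1| := norm_le_sum_coord (u x)
    have hpi : (3:ℝ) < π := Real.pi_gt_three
    have hstep : π*ρ^2*‖u x‖ ≤ 2*π*ρ*a + 4*π/3*Ω*ρ^3 := by
      have hmul : π*ρ^2*‖u x‖ ≤ π*ρ^2*(|u x 0| + |u x 1|) :=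
        mul_le_mul_of_nonneg_left hnorm (by positivity)
      have i0 := hIbound 0
      have i1 := hIbound 1
      nlinarith [mul_pos hρ ha]
    have hfinal : π*ρ^2*(2*a/ρ + 4/3*Ω*ρ) = 2*π*ρ*a + 4*π/3*Ω*ρ^3 := by
      field_simp
    have hpos : (0:ℝ) < π*ρ^2 := by positivity
    exact le_of_mul_le_mul_left (by rw [hfinal]; exact hstep) hpos
  by_cases hcase : Ω * R^2 ≤ a
  · have h := step R hR le_rfl
    have hΩR : Ω * R ≤ a / R := by
      rw [le_div_iff₀ hR]; nlinarith
    have : ‖u x‖ ≤ 2*a/R + 4/3*(a/R) := by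
      have h5 : 4/3*Ω*R ≤ 4/3*(a/R) := by
        have := mul_le_mul_of_nonneg_left hΩR (by norm_num : (0:ℝ) ≤ 4/3)
        linarith only [this]
      linarith only [h, h5]
    have htarget : 2*a/R + 4/3*(a/R) ≤ 4*(a/R + Real.sqrt a * Real.sqrt Ω) := by
      have h1 : 0 ≤ Real.sqrt a * Real.sqrt Ω := by positivity
      have h2 : 0 ≤ a / R := by positivity
      calc 2*a/R + 4/3*(a/R) = 10/3*(a/R) := by ring
      _ ≤ 4*(a/R) := by linarith
      _ ≤ 4*(a/R + Real.sqrt a * Real.sqrt Ω) := by linarith only [h1, h2]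
    linarith only [this, htarget]
  · push_neg at hcase
    have hΩpos : 0 < Ω := by nlinarith
    set ρ := Real.sqrt (a/Ω) with hρ_def
    have hρpos : 0 < ρ := Real.sqrt_pos.mpr (by positivity)
    have hρsq : ρ^2 = a/Ω := Real.sq_sqrt (by positivity)
    have hρR : ρ ≤ R := by
      have : ρ^2 ≤ R^2 := by
        rw [hρsq, div_le_iff₀ hΩpos]
        nlinarith
      nlinarith [hρpos, hR]
    have h := step ρ hρpos hρR
    have hkey : Ω * ρ = Real.sqrt a * Real.sqrt Ω := by
      have h1 : Ω * ρ = Real.sqrt (Ω^2 * (a/Ω)) := by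
        rw [Real.sqrt_mul (by positivity), Real.sqrt_sq hΩpos.le]
      rw [h1, show Ω^2 * (a/Ω) = a * Ω by field_simp, Real.sqrt_mul ha.le]
    have hkey2 : a / ρ = Real.sqrt a * Real.sqrt Ω := by
      rw [div_eq_iff hρpos.ne', ← hkey]
      have : Ω * ρ * ρ = Ω * ρ^2 := by ring
      rw [this, hρsq]
      field_simp
    have : ‖u x‖ ≤ 10/3 * (Real.sqrt a * Real.sqrt Ω) := by
      have e1 : 2*a/ρ = 2*(Real.sqrt a * Real.sqrt Ω) := by
        rw [mul_div_assoc, hkey2]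
      have e2 : 4/3*Ω*ρ = 4/3*(Real.sqrt a * Real.sqrt Ω) := by
        rw [mul_assoc, hkey]
      rw [e1, e2] at h
      linarith only [h]
    have h2 : 0 ≤ a / R := by positivity
    have h3 : 0 ≤ Real.sqrt a * Real.sqrt Ω := by positivity
    linarith only [this, h2, h3]

theorem cubic_interpolation_inequality :
    ∃ C : ℝ, 0 < C ∧
      ∀ u : EuclideanSpace ℝ (Fin 2) → EuclideanSpace ℝ (Fin 2),
        ContDiff ℝ 1 u → (∀ x, div2 u x = 0) →
      ∀ R : ℝ, 0 < R → ∀ x₀ : EuclideanSpace ℝ (Fin 2),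
        ∫ x in Metric.ball x₀ R, ‖u x‖ ^ 3 ≤
          C * ((1 / R) * (∫ x in Metric.ball x₀ (2 * R), ‖u x‖ ^ 2) ^ ((3 : ℝ) / 2) +
            (∫ x in Metric.ball x₀ (2 * R), ‖u x‖ ^ 2) ^ ((5 : ℝ) / 4) *
              (⨆ x ∈ Metric.ball x₀ (2 * R), |rot2 u x|) ^ ((1 : ℝ) / 2)) := by
  refine ⟨4, by norm_num, ?_⟩
  intro u hu hdiv R hR x₀
  have hrotc : Continuous (rot2 u) := rot2_continuous u hu
  set S := Metric.ball x₀ (2*R) with hS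
  set Ω : ℝ := ⨆ x ∈ S, |rot2 u x| with hΩdef
  set Ei : ℝ := ∫ y in S, ‖u y‖^2 with hEi
  -- bound for the sup
  obtain ⟨z, hz, hzB⟩ := (isCompact_closedBall x₀ (2*R)).exists_isMaxOn
    ⟨x₀, Metric.mem_closedBall_self (by positivity)⟩ (hrotc.abs.continuousOn)
  rw [isMaxOn_iff] at hzB
  set K := |rot2 u z| with hK
  have hbdd : BddAbove (Set.range fun y => ⨆ _ : y ∈ S, |rot2 u y|) := by
    refine ⟨max K 0, ?_⟩
    rintro _ ⟨y, rfl⟩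
    by_cases hy : y ∈ S
    · show (⨆ _ : y ∈ S, |rot2 u y|) ≤ max K 0
      rw [ciSup_pos hy]
      exact le_max_of_le_left (hzB y (Metric.ball_subset_closedBall hy))
    · show (⨆ _ : y ∈ S, |rot2 u y|) ≤ max K 0
      haveI : IsEmpty (y ∈ S) := ⟨hy⟩
      rw [Real.iSup_of_isEmpty]
      exact le_max_right _ _
  have hΩ : ∀ y ∈ S, |rot2 u y| ≤ Ω := by
    intro y hy
    rw [hΩdef]
    have := le_ciSup hbdd y
    rwa [ciSup_pos hy] at this
  have hx₀S : x₀ ∈ S := by rw [hS]; exact Metric.mem_ball_self (by linarith)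
  have hΩ0 : 0 ≤ Ω := le_trans (abs_nonneg _) (hΩ x₀ hx₀S)
  have hEi0 : 0 ≤ Ei := setIntegral_nonneg measurableSet_ball (fun y _ => by positivity)
  have hBsubset : Metric.ball x₀ R ⊆ S := by
    rw [hS]; exact Metric.ball_subset_ball (by linarith)
  rcases eq_or_lt_of_le hEi0 with hE0 | hEpos
  · -- E = 0 : u vanishes on S
    have huz : ∀ y ∈ S, u y = 0 := by
      intro y hy
      by_contra hne
      have hpos : 0 < ∫ y in S, ‖u y‖^2 := by
        rw [setIntegral_pos_iff_support_of_nonneg_ae (f := fun y => ‖u y‖^2)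
          (Filter.Eventually.of_forall (fun y => sq_nonneg _))
          (((hu.continuous.norm.pow 2).continuousOn.integrableOn_compact
            (isCompact_closedBall x₀ (2*R))).mono_set Metric.ball_subset_closedBall)]
        have hop : IsOpen ((fun y => ‖u y‖^2) ⁻¹' (Set.Ioi 0) ∩ S) :=
          ((isOpen_Ioi).preimage (hu.continuous.norm.pow 2)).inter Metric.isOpen_ball
        have hne' : ((fun y => ‖u y‖^2) ⁻¹' (Set.Ioi 0) ∩ S).Nonempty := by
          refine ⟨y, ?_, hy⟩
          simp only [Set.mem_preimage, Set.mem_Ioi]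
          exact pow_pos (norm_pos_iff.mpr hne) 2
        have hsub2 : ((fun y => ‖u y‖^2) ⁻¹' (Set.Ioi 0) ∩ S)
            ⊆ (Function.support fun y => ‖u y‖^2) ∩ S := by
          intro w hw
          refine ⟨?_, hw.2⟩
          intro h0
          have hw1 := hw.1
          simp only [Set.mem_preimage, Set.mem_Ioi, h0] at hw1
          exact lt_irrefl 0 hw1
        calc (0:ENNReal) < volume ((fun y => ‖u y‖^2) ⁻¹' (Set.Ioi 0) ∩ S) :=
              hop.measure_pos volume hne'
        _ ≤ volume ((Function.support fun y => ‖u y‖^2) ∩ S) := measure_mono hsub2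
      have hEq : 0 < Ei := by rw [hEi]; exact hpos
      linarith
    have hLHS : ∫ y in Metric.ball x₀ R, ‖u y‖^3 = 0 := by
      rw [setIntegral_congr_fun measurableSet_ball
        (g := fun _ => (0:ℝ)) (fun y hy => by rw [huz y (hBsubset hy)]; simp)]
      simp
    rw [hLHS, ← hE0]
    rw [Real.zero_rpow (by norm_num : (3:ℝ)/2 ≠ 0), Real.zero_rpow (by norm_num : (5:ℝ)/4 ≠ 0)]
    simp
  · -- main case
    set a := Real.sqrt Ei with ha_def
    have ha : 0 < a := Real.sqrt_pos.mpr hEpos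
    set M₀ : ℝ := 4 * (a / R + Real.sqrt a * Real.sqrt Ω) with hM₀
    have hM₀0 : 0 ≤ M₀ := by rw [hM₀]; positivity
    have hpt : ∀ y ∈ Metric.ball x₀ R, ‖u y‖ ≤ M₀ := by
      intro y hy
      exact pointwise_bound u hu hdiv x₀ R hR y hy Ω hΩ Ei rfl hEpos
    have hint3 : IntegrableOn (fun y => ‖u y‖^3) (Metric.ball x₀ R) :=
      ((hu.continuous.norm.pow 3).continuousOn.integrableOn_compact
        (isCompact_closedBall x₀ R)).mono_set Metric.ball_subset_closedBall
    have hint2' : IntegrableOn (fun y => M₀ * ‖u y‖^2) (Metric.ball x₀ R) :=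
      ((continuous_const.mul (hu.continuous.norm.pow 2)).continuousOn.integrableOn_compact
        (isCompact_closedBall x₀ R)).mono_set Metric.ball_subset_closedBall
    have h1 : ∫ y in Metric.ball x₀ R, ‖u y‖^3 ≤ ∫ y in Metric.ball x₀ R, M₀ * ‖u y‖^2 := by
      apply setIntegral_mono_on hint3 hint2' measurableSet_ball
      intro y hy
      calc ‖u y‖^3 = ‖u y‖ * ‖u y‖^2 := by ring
      _ ≤ M₀ * ‖u y‖^2 := mul_le_mul_of_nonneg_right (hpt y hy) (by positivity)
    have h2 : ∫ y in Metric.ball x₀ R, M₀ * ‖u y‖^2 ≤ M₀ * Ei := by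
      rw [integral_const_mul]
      apply mul_le_mul_of_nonneg_left ?_ hM₀0
      rw [hEi]
      apply setIntegral_mono_set
      · exact ((hu.continuous.norm.pow 2).continuousOn.integrableOn_compact
          (isCompact_closedBall x₀ (2*R))).mono_set Metric.ball_subset_closedBall
      · exact Filter.Eventually.of_forall fun y => by positivity
      · exact hBsubset.eventuallyLE
    -- rpow identities
    have hrw1 : Ei ^ ((3:ℝ)/2) = a * Ei := by
      rw [show (3:ℝ)/2 = 1/2 + 1 by norm_num, Real.rpow_add hEpos, Real.rpow_one,
        ha_def, Real.sqrt_eq_rpow]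
    have hrw2 : Ei ^ ((5:ℝ)/4) = Real.sqrt a * Ei := by
      rw [show (5:ℝ)/4 = 1/4 + 1 by norm_num, Real.rpow_add hEpos, Real.rpow_one, ha_def]
      congr 1
      rw [Real.sqrt_eq_rpow, Real.sqrt_eq_rpow, ← Real.rpow_mul hEpos.le]
      norm_num
    have hrw3 : Ω ^ ((1:ℝ)/2) = Real.sqrt Ω := (Real.sqrt_eq_rpow Ω).symm
    have hfin : M₀ * Ei = 4 * ((1/R) * (Ei ^ ((3:ℝ)/2)) + Ei ^ ((5:ℝ)/4) * Real.sqrt Ω) := by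
      rw [hrw1, hrw2, hM₀]
      field_simp
    rw [hrw3]
    calc ∫ y in Metric.ball x₀ R, ‖u y‖^3 ≤ M₀ * Ei := le_trans h1 h2
    _ = 4 * ((1/R) * (Ei ^ ((3:ℝ)/2)) + Ei ^ ((5:ℝ)/4) * Real.sqrt Ω) := hfin
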